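/- Simplex enclosing: Let 1 ≤ m ≤ d and let v : Fin (m+1) → EuclideanSpace ℝ (Fin d) be affinely independent (an m-simplex), with barycentric circumradius β = max over i of dist κ (v i) where κ = (1/(m+1)) • ∑ i, v i, and diameter D = max over pairs i, j of dist (v i) (v j). Then there exist a center c and a radius r such that the convex hull of the vertices is contained in the closed ball centered at c of radius r, and r ≤ min (β, sqrt(m / (2*m + 2)) * D). -/

import Mathlib

open Finset
open scoped RealInnerProductSpace

/-- **Simplex enclosing.** An `m`-simplex with barycentric circumradius `β` and
diameter `D` is enclosable by a closed ball of radius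
`r ≤ min β (sqrt (m/(2m+2)) · D)`. -/
theorem simplex_enclosing (d m : ℕ) (hm : 1 ≤ m) (hmd : m ≤ d)
    (v : Fin (m + 1) → EuclideanSpace ℝ (Fin d))
    (hai : AffineIndependent ℝ v)
    (κ : EuclideanSpace ℝ (Fin d))
    (hκ : κ = (1 / ((m : ℝ) + 1)) • ∑ i, v i)
    (β : ℝ)
    (hβ : β = Finset.univ.sup' Finset.univ_nonempty
      (fun i : Fin (m + 1) => dist κ (v i)))
    (D : ℝ)
    (hD : D = Finset.univ.sup' Finset.univ_nonempty
      (fun p : Fin (m + 1) × Fin (m + 1) => dist (v p.1) (v p.2))) :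
    ∃ (c : EuclideanSpace ℝ (Fin d)) (r : ℝ),
      convexHull ℝ (Set.range v) ⊆ Metric.closedBall c r ∧
      r ≤ min β (Real.sqrt ((m : ℝ) / (2 * (m : ℝ) + 2)) * D) := by
  classical
  have hedge' : ∀ i j : Fin (m + 1), dist (v i) (v j) ≤ D := by
    intro i j
    rw [hD]
    exact Finset.le_sup' (fun p : Fin (m + 1) × Fin (m + 1) => dist (v p.1) (v p.2))
      (Finset.mem_univ (i, j))
  have hD0 : 0 ≤ D := le_trans dist_nonneg (hedge' 0 0)
  have hedge : ∀ i j : Fin (m + 1), ‖v i - v j‖ ≤ D := by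
    intro i j
    rw [← dist_eq_norm]
    exact hedge' i j
  set f : (Fin (m + 1) → ℝ) → ℝ :=
    fun w => (∑ i, w i * ‖v i‖ ^ 2) - ‖∑ i, w i • v i‖ ^ 2 with hf
  have hcont : Continuous f := by
    apply Continuous.sub
    · exact continuous_finset_sum _ fun i _ => (continuous_apply i).mul continuous_const
    · exact ((continuous_finset_sum _ fun i _ =>
        (continuous_apply i).smul continuous_const).norm).pow 2
  have hne : (stdSimplex ℝ (Fin (m + 1))).Nonempty := by
    refine ⟨fun i => if i = 0 then 1 else 0, fun i => ?_, ?_⟩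
    · show (0:ℝ) ≤ if i = 0 then 1 else 0
      split_ifs <;> norm_num
    · simp
  obtain ⟨w, hwS, hwmax⟩ :=
    (isCompact_stdSimplex ℝ (Fin (m + 1))).exists_isMaxOn hne hcont.continuousOn
  have hw0 : ∀ i, 0 ≤ w i := hwS.1
  have hw1 : ∑ i, w i = 1 := hwS.2
  set c : EuclideanSpace ℝ (Fin d) := ∑ i, w i • v i with hc
  -- every vertex is within `sqrt (f w)` of `c`
  have hvert : ∀ j : Fin (m + 1), ‖v j - c‖ ^ 2 ≤ f w := by
    intro j
    set δ : Fin (m + 1) → ℝ := fun i => if i = j then 1 else 0 with hδ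
    set A : ℝ := (‖v j‖ ^ 2 - ∑ i, w i * ‖v i‖ ^ 2) - 2 * ⟪c, v j - c⟫ with hA
    set B : ℝ := ‖v j - c‖ ^ 2 with hB
    have hδsum : ∑ i, δ i * ‖v i‖ ^ 2 = ‖v j‖ ^ 2 := by
      simp [hδ, ite_mul]
    have hδsmul : ∑ i, δ i • v i = v j := by
      simp [hδ, ite_smul]
    have hval : ∀ t : ℝ,
        f (fun i => (1 - t) * w i + t * δ i) = f w + t * A - t ^ 2 * B := by
      intro t
      have hsum1 : (∑ i, ((1 - t) * w i + t * δ i) * ‖v i‖ ^ 2)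
          = (1 - t) * (∑ i, w i * ‖v i‖ ^ 2) + t * ‖v j‖ ^ 2 := by
        rw [← hδsum, Finset.mul_sum, Finset.mul_sum, ← Finset.sum_add_distrib]
        exact Finset.sum_congr rfl fun i _ => by ring
      have hsum2 : (∑ i, ((1 - t) * w i + t * δ i) • v i)
          = c + t • (v j - c) := by
        have : (∑ i, ((1 - t) * w i + t * δ i) • v i)
            = (1 - t) • (∑ i, w i • v i) + t • (∑ i, δ i • v i) := by
          rw [Finset.smul_sum, Finset.smul_sum, ← Finset.sum_add_distrib]
          exact Finset.sum_congr rfl fun i _ => by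
            rw [smul_smul, smul_smul, ← add_smul]
        rw [this, hδsmul, ← hc, smul_sub]
        module
      have hnorm : ‖c + t • (v j - c)‖ ^ 2
          = ‖c‖ ^ 2 + 2 * (t * ⟪c, v j - c⟫) + t ^ 2 * ‖v j - c‖ ^ 2 := by
        rw [norm_add_sq_real, real_inner_smul_right, norm_smul, Real.norm_eq_abs, mul_pow, sq_abs]
      simp only [hf, hsum1, hsum2, hnorm, hA, hB]
      ring
    have hmem : ∀ t : ℝ, 0 ≤ t → t ≤ 1 →
        (fun i => (1 - t) * w i + t * δ i) ∈ stdSimplex ℝ (Fin (m + 1)) := by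
      intro t ht0 ht1
      have hδS : δ ∈ stdSimplex ℝ (Fin (m + 1)) := by
        refine ⟨fun i => ?_, ?_⟩
        · simp only [hδ]; split_ifs <;> norm_num
        · simp [hδ]
      exact (convex_stdSimplex ℝ (Fin (m + 1))) hwS hδS
        (by linarith : (0:ℝ) ≤ 1 - t) ht0 (by ring)
    have hAle : A ≤ 0 := by
      have hstep : ∀ t : ℝ, 0 < t → t ≤ 1 → A ≤ t * B := by
        intro t ht0 ht1
        have hle : f (fun i => (1 - t) * w i + t * δ i) ≤ f w :=
          hwmax (hmem t ht0.le ht1)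
        rw [hval t] at hle
        have : t * A ≤ t ^ 2 * B := by linarith
        have ht2 : t ^ 2 * B = t * (t * B) := by ring
        rw [ht2] at this
        exact le_of_mul_le_mul_left this ht0
      by_contra hA'
      push_neg at hA'
      have hB0 : 0 ≤ B := sq_nonneg _
      set t0 : ℝ := min 1 (A / (2 * (B + 1))) with ht0def
      have hfrac : 0 < A / (2 * (B + 1)) := by positivity
      have ht0pos : 0 < t0 := lt_min one_pos hfrac
      have ht0le1 : t0 ≤ 1 := min_le_left _ _
      have h1 : A ≤ t0 * B := hstep t0 ht0pos ht0le1
      have h2 : t0 * B ≤ A / (2 * (B + 1)) * B :=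
        mul_le_mul_of_nonneg_right (min_le_right _ _) hB0
      have h3 : A / (2 * (B + 1)) * B < A := by
        rw [div_mul_eq_mul_div, div_lt_iff₀ (by positivity)]
        nlinarith
      linarith
    have h1 : f (fun i => (1 - 1) * w i + 1 * δ i) = f w + 1 * A - 1 ^ 2 * B :=
      hval 1
    have h0 : f (fun i => (1 - 1) * w i + 1 * δ i) = 0 := by
      have : (fun i => (1 - (1:ℝ)) * w i + 1 * δ i) = δ := by
        funext i; ring
      rw [this, hf]
      simp only [hδsum, hδsmul]
      ring
    rw [h0] at h1
    have : B = f w + A := by linarith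
    rw [hB] at this
    linarith [this, hAle]
  -- bound `f w`
  have hfbound : f w ≤ (m : ℝ) / (2 * (m : ℝ) + 2) * D ^ 2 := by
    have hcc : ‖c‖ ^ 2 = ∑ i, ∑ j, w i * w j * ⟪v i, v j⟫ := by
      rw [← real_inner_self_eq_norm_sq, hc]
      rw [sum_inner]
      refine Finset.sum_congr rfl fun i _ => ?_
      rw [real_inner_smul_left, inner_sum, Finset.mul_sum]
      refine Finset.sum_congr rfl fun j _ => ?_
      rw [real_inner_smul_right]
      ring
    have hS1 : ∑ i, ∑ j, w i * w j * ‖v i‖ ^ 2 = ∑ i, w i * ‖v i‖ ^ 2 := by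
      refine Finset.sum_congr rfl fun i _ => ?_
      calc ∑ j, w i * w j * ‖v i‖ ^ 2 = (∑ j, w j) * (w i * ‖v i‖ ^ 2) := by
            rw [Finset.sum_mul]; exact Finset.sum_congr rfl fun j _ => by ring
        _ = w i * ‖v i‖ ^ 2 := by rw [hw1, one_mul]
    have hS2 : ∑ i, ∑ j, w i * w j * ‖v j‖ ^ 2 = ∑ j, w j * ‖v j‖ ^ 2 := by
      rw [Finset.sum_comm]
      refine Finset.sum_congr rfl fun j _ => ?_
      calc ∑ i, w i * w j * ‖v j‖ ^ 2 = (∑ i, w i) * (w j * ‖v j‖ ^ 2) := by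
            rw [Finset.sum_mul]; exact Finset.sum_congr rfl fun i _ => by ring
        _ = w j * ‖v j‖ ^ 2 := by rw [hw1, one_mul]
    have hid : 2 * f w = ∑ i, ∑ j, w i * w j * ‖v i - v j‖ ^ 2 := by
      have hrhs : ∑ i, ∑ j, w i * w j * ‖v i - v j‖ ^ 2
          = (∑ i, ∑ j, w i * w j * ‖v i‖ ^ 2)
            + (∑ i, ∑ j, w i * w j * ‖v j‖ ^ 2)
            - 2 * (∑ i, ∑ j, w i * w j * ⟪v i, v j⟫) := by
        rw [Finset.mul_sum, ← Finset.sum_add_distrib, ← Finset.sum_sub_distrib]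
        refine Finset.sum_congr rfl fun i _ => ?_
        rw [Finset.mul_sum, ← Finset.sum_add_distrib, ← Finset.sum_sub_distrib]
        refine Finset.sum_congr rfl fun j _ => ?_
        rw [norm_sub_sq_real]
        ring
      rw [hrhs, hS1, hS2, ← hcc, hf]
      ring
    have hbound : ∑ i, ∑ j, w i * w j * ‖v i - v j‖ ^ 2
        ≤ (1 - ∑ i, (w i) ^ 2) * D ^ 2 := by
      have key : ∀ i j : Fin (m + 1), w i * w j * ‖v i - v j‖ ^ 2
          ≤ w i * w j * D ^ 2 - (if j = i then (w i) ^ 2 * D ^ 2 else 0) := by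
        intro i j
        by_cases h : j = i
        · subst h
          simp [sub_self, norm_zero]
          nlinarith [sq_nonneg (w j), sq_nonneg D]
        · rw [if_neg h, sub_zero]
          have h1 : ‖v i - v j‖ ^ 2 ≤ D ^ 2 :=
            pow_le_pow_left₀ (norm_nonneg _) (hedge i j) 2
          have h2 : 0 ≤ w i * w j := mul_nonneg (hw0 i) (hw0 j)
          exact mul_le_mul_of_nonneg_left h1 h2
      calc ∑ i, ∑ j, w i * w j * ‖v i - v j‖ ^ 2
          ≤ ∑ i, ∑ j, (w i * w j * D ^ 2 - (if j = i then (w i) ^ 2 * D ^ 2 else 0)) :=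
            Finset.sum_le_sum fun i _ => Finset.sum_le_sum fun j _ => key i j
        _ = (1 - ∑ i, (w i) ^ 2) * D ^ 2 := by
            have inner_eq : ∀ i : Fin (m + 1),
                ∑ j, (w i * w j * D ^ 2 - (if j = i then (w i) ^ 2 * D ^ 2 else 0))
                = w i * D ^ 2 - (w i) ^ 2 * D ^ 2 := by
              intro i
              rw [Finset.sum_sub_distrib]
              congr 1
              · calc ∑ j, w i * w j * D ^ 2 = (∑ j, w j) * (w i * D ^ 2) := by
                      rw [Finset.sum_mul]; exact Finset.sum_congr rfl fun j _ => by ring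
                  _ = w i * D ^ 2 := by rw [hw1, one_mul]
              · simp
            rw [Finset.sum_congr rfl fun i _ => inner_eq i, Finset.sum_sub_distrib]
            have h1 : ∑ i, w i * D ^ 2 = D ^ 2 := by
              rw [← Finset.sum_mul, hw1, one_mul]
            have h2 : ∑ i, (w i) ^ 2 * D ^ 2 = (∑ i, (w i) ^ 2) * D ^ 2 :=
              (Finset.sum_mul _ _ _).symm
            rw [h1, h2]
            ring
    have hsq : 1 / ((m : ℝ) + 1) ≤ ∑ i, (w i) ^ 2 := by
      have hcs := sq_sum_le_card_mul_sum_sq (s := (Finset.univ : Finset (Fin (m + 1)))) (f := w)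
      rw [hw1, one_pow, Finset.card_univ, Fintype.card_fin] at hcs
      rw [div_le_iff₀ (by positivity : (0:ℝ) < (m : ℝ) + 1)]
      push_cast at hcs ⊢
      linarith
    have hmpos : (0:ℝ) < (m : ℝ) + 1 := by positivity
    have heq : (m : ℝ) / (2 * (m : ℝ) + 2) * D ^ 2
        = (1 - 1 / ((m : ℝ) + 1)) * D ^ 2 / 2 := by
      have h : (1:ℝ) - 1 / ((m : ℝ) + 1) = (m : ℝ) / ((m : ℝ) + 1) := by
        rw [one_sub_div (ne_of_gt hmpos)]
        ring_nf
      rw [h, div_mul_eq_mul_div, div_mul_eq_mul_div, div_div]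
      congr 1
      ring
    have hD2 : 0 ≤ D ^ 2 := sq_nonneg D
    have : (1 - ∑ i, (w i) ^ 2) * D ^ 2 ≤ (1 - 1 / ((m : ℝ) + 1)) * D ^ 2 :=
      mul_le_mul_of_nonneg_right (by linarith) hD2
    have h2f : 2 * f w ≤ (1 - 1 / ((m : ℝ) + 1)) * D ^ 2 := by
      rw [hid]
      exact le_trans hbound this
    rw [heq]
    linarith [h2f]
  -- final assembly
  have hr2 : ∀ j : Fin (m + 1),
      dist (v j) c ≤ Real.sqrt ((m : ℝ) / (2 * (m : ℝ) + 2)) * D := by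
    intro j
    have h1 : ‖v j - c‖ ^ 2 ≤ (m : ℝ) / (2 * (m : ℝ) + 2) * D ^ 2 :=
      le_trans (hvert j) hfbound
    have h2 : ‖v j - c‖ = Real.sqrt (‖v j - c‖ ^ 2) :=
      (Real.sqrt_sq (norm_nonneg _)).symm
    rw [dist_eq_norm, h2]
    calc Real.sqrt (‖v j - c‖ ^ 2)
        ≤ Real.sqrt ((m : ℝ) / (2 * (m : ℝ) + 2) * D ^ 2) := Real.sqrt_le_sqrt h1
      _ = Real.sqrt ((m : ℝ) / (2 * (m : ℝ) + 2)) * D := by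
          rw [Real.sqrt_mul (by positivity), Real.sqrt_sq hD0]
  set R : ℝ := min β (Real.sqrt ((m : ℝ) / (2 * (m : ℝ) + 2)) * D) with hR
  by_cases hcase : β ≤ Real.sqrt ((m : ℝ) / (2 * (m : ℝ) + 2)) * D
  · refine ⟨κ, R, ?_, le_rfl⟩
    refine convexHull_min ?_ (convex_closedBall _ _)
    rintro x ⟨i, rfl⟩
    rw [Metric.mem_closedBall, hR, min_eq_left hcase, dist_comm]
    rw [hβ]
    exact Finset.le_sup' (fun i : Fin (m + 1) => dist κ (v i)) (Finset.mem_univ i)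
  · refine ⟨c, R, ?_, le_rfl⟩
    refine convexHull_min ?_ (convex_closedBall _ _)
    rintro x ⟨i, rfl⟩
    rw [Metric.mem_closedBall, hR, min_eq_right (le_of_lt (not_le.mp hcase))]
    exact hr2 i
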